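/- arXiv:1309.0264 — 6 statements merged into one kernel-verified Lean document; each statement's English description precedes it below -/
import Mathlib

section
/- Let π ≤ β ≤ 2π, let c ∈ (0, 1/4], and let α = (1+√(1−4c))/2 be the largest root of α(1−α) = c. If 3π/2 − β ≤ ω ≤ 2π − β, then for all θ with π/2 ≤ θ ≤ β − π/2 one has √c·tan(√c·(β/2 − θ))·cos(θ+ω) + α·(1 + sin(θ+ω)) ≥ 0. -/
open Real Set

lemma tan_mul_le_mul_tan {l y : ℝ} (hl0 : 0 ≤ l) (hl1 : l ≤ 1) (hy0 : 0 ≤ y)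
    (hy : y < Real.pi / 2) : Real.tan (l * y) ≤ l * Real.tan y := by
  have hpi := Real.pi_pos
  have hcos : ∀ x ∈ Icc (0:ℝ) y, 0 < Real.cos x := fun x hx =>
    Real.cos_pos_of_mem_Ioo ⟨by linarith [hx.1], by linarith [hx.2]⟩
  have hd : ∀ x ∈ Icc (0:ℝ) y,
      HasDerivAt (fun x => l * Real.tan x - Real.tan (l * x))
        (l * (1 / Real.cos x ^ 2) - 1 / Real.cos (l * x) ^ 2 * l) x := by
    intro x hx
    have hlx : l * x ∈ Icc (0:ℝ) y :=
      ⟨mul_nonneg hl0 hx.1, le_trans (by nlinarith [hx.1, hx.2]) hx.2⟩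
    have h1 := (Real.hasDerivAt_tan (ne_of_gt (hcos x hx))).const_mul l
    have h2 := (Real.hasDerivAt_tan (ne_of_gt (hcos _ hlx))).comp x
      ((hasDerivAt_id x).const_mul l)
    exact (h1.sub h2).congr_deriv (by ring)
  have hmono : MonotoneOn (fun x => l * Real.tan x - Real.tan (l * x)) (Icc 0 y) := by
    apply monotoneOn_of_deriv_nonneg (convex_Icc 0 y)
    · exact fun x hx => (hd x hx).continuousAt.continuousWithinAt
    · intro x hx
      exact (hd x (interior_subset hx)).differentiableAt.differentiableWithinAt
    · intro x hx
      rw [interior_Icc] at hx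
      have hx' : x ∈ Icc (0:ℝ) y := ⟨hx.1.le, hx.2.le⟩
      rw [(hd x hx').deriv]
      have hlx : l * x ∈ Icc (0:ℝ) y :=
        ⟨mul_nonneg hl0 hx'.1, le_trans (by nlinarith [hx'.1, hx'.2]) hx'.2⟩
      have hcc : Real.cos x ≤ Real.cos (l * x) :=
        Real.cos_le_cos_of_nonneg_of_le_pi hlx.1 (by linarith [hx'.2]) (by nlinarith [hx'.1])
      have h1 : 0 < Real.cos x := hcos x hx'
      have h2 : 0 < Real.cos (l * x) := hcos _ hlx
      have : 1 / Real.cos (l * x) ^ 2 ≤ 1 / Real.cos x ^ 2 := by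
        apply one_div_le_one_div_of_le (by positivity)
        nlinarith
      nlinarith
  have h0 : (0:ℝ) ∈ Icc (0:ℝ) y := ⟨le_refl _, hy0⟩
  have hyy : y ∈ Icc (0:ℝ) y := ⟨hy0, le_refl _⟩
  have := hmono h0 hyy hy0
  simp only [mul_zero, Real.tan_zero, sub_zero] at this
  linarith

set_option maxHeartbeats 1600000

/-- For `π ≤ β ≤ 2π`, `c ∈ (0, 1/4]`, `α = (1+√(1−4c))/2` the largest root of
`α(1−α) = c`, and `3π/2 − β ≤ ω ≤ 2π − β`, one has
`√c·tan(√c·(β/2 − θ))·cos(θ+ω) + α·(1 + sin(θ+ω)) ≥ 0` for `π/2 ≤ θ ≤ β − π/2`. -/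
theorem tan_cos_inequality_plus
    (β c α ω : ℝ)
    (hβ1 : Real.pi ≤ β) (hβ2 : β ≤ 2 * Real.pi)
    (hc : c ∈ Set.Ioc (0 : ℝ) (1 / 4))
    (hα : α = (1 + Real.sqrt (1 - 4 * c)) / 2)
    (hω1 : 3 * Real.pi / 2 - β ≤ ω) (hω2 : ω ≤ 2 * Real.pi - β) :
    ∀ θ : ℝ, Real.pi / 2 ≤ θ → θ ≤ β - Real.pi / 2 →
      0 ≤ Real.sqrt c * Real.tan (Real.sqrt c * (β / 2 - θ)) * Real.cos (θ + ω) +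
        α * (1 + Real.sin (θ + ω)) := by
  intro θ hθ1 hθ2
  obtain ⟨hc0, hc4⟩ := hc
  have hpi := Real.pi_pos
  set s := Real.sqrt c with hs_def
  have hs0 : 0 < s := Real.sqrt_pos.2 hc0
  have hs2 : s ^ 2 = c := Real.sq_sqrt hc0.le
  have hs_half : s ≤ 1 / 2 := by
    rw [hs_def, show (1:ℝ)/2 = Real.sqrt (1/4) by
      rw [show (1:ℝ)/4 = (1/2)^2 by norm_num, Real.sqrt_sq]; norm_num]
    exact Real.sqrt_le_sqrt hc4
  -- facts about α
  have hr2 : Real.sqrt (1 - 4 * c) ^ 2 = 1 - 4 * c := Real.sq_sqrt (by linarith)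
  have hr0 : 0 ≤ Real.sqrt (1 - 4 * c) := Real.sqrt_nonneg _
  have hα_half : 1 / 2 ≤ α := by rw [hα]; linarith
  have hαc : α * (1 - α) = c := by rw [hα]; nlinarith
  have hα2c : 2 * c ≤ α := by nlinarith
  set t := β / 2 - θ with ht_def
  set φ := θ + ω with hφ_def
  have ht_ub : t ≤ Real.pi / 2 := by simp only [ht_def]; linarith
  have ht_lb : -(Real.pi / 2) ≤ t := by simp only [ht_def]; linarith
  have hsin1 : -1 ≤ Real.sin φ := Real.neg_one_le_sin φ
  rcases le_or_gt t 0 with ht | ht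
  · -- t ≤ 0 : then cos φ ≤ 0 and tan(s t) ≤ 0
    have hφlb : Real.pi / 2 ≤ φ := by simp only [hφ_def]; simp only [ht_def] at ht; linarith
    have hφub : φ ≤ Real.pi + Real.pi / 2 := by simp only [hφ_def]; linarith
    have hcosφ : Real.cos φ ≤ 0 := Real.cos_nonpos_of_pi_div_two_le_of_le hφlb hφub
    have htan : Real.tan (s * t) ≤ 0 := by
      apply Real.tan_nonpos_of_nonpos_of_neg_pi_div_two_le
      · exact mul_nonpos_of_nonneg_of_nonpos hs0.le ht
      · nlinarith
    have h1 : 0 ≤ s * Real.tan (s * t) * Real.cos φ := by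
      have := mul_nonneg (neg_nonneg.2 (mul_nonpos_of_nonneg_of_nonpos hs0.le htan))
        (neg_nonneg.2 hcosφ)
      nlinarith
    have h2 : 0 ≤ α * (1 + Real.sin φ) := mul_nonneg (by linarith) (by linarith)
    linarith
  · -- t > 0 : tan(s t) ≥ 0
    have hst : 0 ≤ s * t := mul_nonneg hs0.le ht.le
    have hstub : s * t ≤ Real.pi / 2 := by
      have := mul_le_mul hs_half ht_ub ht.le (by norm_num : (0:ℝ) ≤ 1/2)
      linarith
    have htan0 : 0 ≤ Real.tan (s * t) :=
      Real.tan_nonneg_of_nonneg_of_le_pi_div_two hst hstub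
    rcases le_or_gt 0 (Real.cos φ) with hcosφ | hcosφ
    · have h1 : 0 ≤ s * Real.tan (s * t) * Real.cos φ :=
        mul_nonneg (mul_nonneg hs0.le htan0) hcosφ
      have h2 : 0 ≤ α * (1 + Real.sin φ) := mul_nonneg (by linarith) (by linarith)
      linarith
    · -- main case: t > 0, cos φ < 0
      have hφ0 : 0 ≤ φ := by simp only [hφ_def]; linarith
      have hφlb : Real.pi / 2 < φ := by
        by_contra h
        push_neg at h
        exact absurd (Real.cos_nonneg_of_neg_pi_div_two_le_of_le (by linarith) h)
          (not_le.2 hcosφ)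
      have hφub : φ ≤ 3 * Real.pi / 2 - t := by
        simp only [hφ_def, ht_def] at *; linarith
      set x := 3 * Real.pi / 2 - φ with hx_def
      have hx1 : t ≤ x := by simp only [hx_def]; linarith
      have hx2 : x < Real.pi := by simp only [hx_def]; linarith
      have hx0 : 0 < x := lt_of_lt_of_le ht hx1
      have hφx : φ = Real.pi + (Real.pi / 2 - x) := by simp only [hx_def]; ring
      have hcos_eq : Real.cos φ = -Real.sin x := by
        rw [hφx]; simp [Real.cos_add, Real.cos_pi_div_two_sub]
      have hsin_eq : Real.sin φ = -Real.cos x := by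
        rw [hφx]; simp [Real.sin_add, Real.sin_pi_div_two_sub]
      have hsinx : 0 ≤ Real.sin x := Real.sin_nonneg_of_nonneg_of_le_pi hx0.le hx2.le
      -- half angle facts
      have hch : 0 < Real.cos (x / 2) :=
        Real.cos_pos_of_mem_Ioo (Set.mem_Ioo.2 ⟨by linarith, by linarith⟩)
      have hsh : 0 ≤ Real.sin (x / 2) :=
        Real.sin_nonneg_of_nonneg_of_le_pi (by linarith) (by linarith)
      have hsin2 : Real.sin x = 2 * Real.sin (x / 2) * Real.cos (x / 2) := by
        have h := Real.sin_two_mul (x / 2)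
        rw [show 2 * (x / 2) = x by ring] at h
        linarith
      have hcos2 : Real.cos x = 1 - 2 * Real.sin (x / 2) ^ 2 := by
        have h := Real.cos_two_mul (x / 2)
        rw [show 2 * (x / 2) = x by ring] at h
        linarith [Real.sin_sq_add_cos_sq (x / 2)]
      have htanh : Real.tan (x / 2) = Real.sin (x / 2) / Real.cos (x / 2) := Real.tan_eq_sin_div_cos _
      -- key bound : tan (s*t) ≤ 2*s*tan(x/2)
      have hkey : Real.tan (s * t) ≤ 2 * s * Real.tan (x / 2) := by
        have hmono : Real.tan (s * t) ≤ Real.tan (s * x) := by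
          have hsx : s * x < Real.pi / 2 := by
            have h1 : s * x ≤ 1 / 2 * x :=
              mul_le_mul_of_nonneg_right hs_half hx0.le
            linarith
          rcases eq_or_lt_of_le (mul_le_mul_of_nonneg_left hx1 hs0.le) with h | h
          · rw [h]
          · exact (Real.tan_lt_tan_of_nonneg_of_lt_pi_div_two hst hsx h).le
        have := tan_mul_le_mul_tan (l := 2 * s) (y := x / 2) (by linarith) (by linarith)
          (by linarith) (by linarith)
        rw [show 2 * s * (x / 2) = s * x by ring] at this
        linarith
      have htanh0 : 0 ≤ Real.tan (x / 2) := by rw [htanh]; positivity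
      have hts : Real.tan (x / 2) * Real.sin x = 2 * Real.sin (x / 2) ^ 2 := by
        rw [htanh, hsin2]; field_simp
      have h1 : s * Real.tan (s * t) ≤ 2 * c * Real.tan (x / 2) := by
        have h2 := mul_le_mul_of_nonneg_left hkey hs0.le
        have heq : s * (2 * s * Real.tan (x / 2)) = 2 * c * Real.tan (x / 2) := by
          rw [← hs2]; ring
        linarith
      have hb : s * Real.tan (s * t) * Real.sin x
          ≤ 2 * (c * Real.sin (x / 2) ^ 2) + 2 * (c * Real.sin (x / 2) ^ 2) := by
        have h2 := mul_le_mul_of_nonneg_right h1 hsinx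
        have heq : 2 * c * Real.tan (x / 2) * Real.sin x
            = 2 * (c * (Real.tan (x / 2) * Real.sin x)) := by ring
        have heq2 : 2 * (c * (2 * Real.sin (x / 2) ^ 2))
            = 2 * (c * Real.sin (x / 2) ^ 2) + 2 * (c * Real.sin (x / 2) ^ 2) := by ring
        rw [heq, hts, heq2] at h2
        linarith
      have h3 : 2 * (c * Real.sin (x / 2) ^ 2) ≤ α * Real.sin (x / 2) ^ 2 := by
        have := mul_le_mul_of_nonneg_right hα2c (sq_nonneg (Real.sin (x / 2)))
        linarith
      rw [hcos_eq, hsin_eq, hcos2]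
      have hgoal : s * Real.tan (s * t) * -Real.sin x
            + α * (1 + -(1 - 2 * Real.sin (x / 2) ^ 2))
          = -(s * Real.tan (s * t) * Real.sin x) + 2 * (α * Real.sin (x / 2) ^ 2) := by
        ring
      rw [hgoal]
      have heq3 : 2 * (α * Real.sin (x / 2) ^ 2) = α * Real.sin (x / 2) ^ 2 + α * Real.sin (x / 2) ^ 2 := by ring
      linarith
end

section
/- Let π ≤ β ≤ 2π, let c ∈ (0, 1/4], and let α = (1+√(1−4c))/2 be the largest root of α(1−α) = c. If 0 ≤ ω ≤ 2π − β, then for all θ with π/2 ≤ θ ≤ β − π/2 one has −√c·tan(√c·(β/2 − θ))·cos(θ+ω) + α·(1 − sin(θ+ω)) ≥ 0. -/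
open Real Set

set_option maxHeartbeats 1000000 in
/-- For `π ≤ β ≤ 2π`, `c ∈ (0, 1/4]`, `α = (1+√(1−4c))/2` the largest root of
`α(1−α) = c`, and `0 ≤ ω ≤ 2π − β`, one has
`−√c·tan(√c·(β/2 − θ))·cos(θ+ω) + α·(1 − sin(θ+ω)) ≥ 0` for `π/2 ≤ θ ≤ β − π/2`. -/
theorem tan_cos_inequality_minus
    (β c α ω : ℝ)
    (hβ1 : Real.pi ≤ β) (hβ2 : β ≤ 2 * Real.pi)
    (hc : c ∈ Set.Ioc (0 : ℝ) (1 / 4))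
    (hα : α = (1 + Real.sqrt (1 - 4 * c)) / 2)
    (hω1 : 0 ≤ ω) (hω2 : ω ≤ 2 * Real.pi - β) :
    ∀ θ : ℝ, Real.pi / 2 ≤ θ → θ ≤ β - Real.pi / 2 →
      0 ≤ -(Real.sqrt c * Real.tan (Real.sqrt c * (β / 2 - θ))) * Real.cos (θ + ω) +
        α * (1 - Real.sin (θ + ω)) := by
  obtain ⟨hc0, hc4⟩ := hc
  intro θ hθ1 hθ2
  have hπ := Real.pi_pos
  set s := Real.sqrt c with hs
  have hs0 : 0 ≤ s := Real.sqrt_nonneg c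
  have hs2 : s ≤ 1 / 2 := by
    rw [hs, show (1:ℝ)/2 = Real.sqrt (1/4) by
      rw [show (1:ℝ)/4 = (1/2)^2 by norm_num, Real.sqrt_sq (by norm_num)]]
    exact Real.sqrt_le_sqrt hc4
  have hα0 : (1:ℝ)/2 ≤ α := by
    rw [hα]; nlinarith [Real.sqrt_nonneg (1 - 4*c)]
  have hφ1 : Real.pi/2 ≤ θ + ω := by linarith
  have hφ2 : θ + ω ≤ Real.pi + Real.pi/2 := by linarith
  have hsin : Real.sin (θ + ω) ≤ 1 := Real.sin_le_one _
  have hcosn : Real.cos (θ + ω) ≤ 0 :=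
    Real.cos_nonpos_of_pi_div_two_le_of_le hφ1 (by linarith)
  by_cases hcase : θ ≤ β / 2
  · -- tan term is nonneg, cos is nonpos
    have ht0 : 0 ≤ Real.tan (s * (β/2 - θ)) := by
      apply Real.tan_nonneg_of_nonneg_of_le_pi_div_two
      · nlinarith
      · nlinarith
    nlinarith [mul_nonneg hs0 ht0]
  · push_neg at hcase
    set x := θ - β/2 with hx
    have hx0 : 0 < x := by simp [hx]; linarith
    have hx2 : x ≤ Real.pi/2 := by simp [hx]; linarith
    set u := θ + ω - Real.pi/2 with hu
    have hu1 : x ≤ u := by simp [hu, hx]; linarith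
    have hu2 : u ≤ Real.pi := by simp [hu]; linarith
    have hcosrw : Real.cos (θ + ω) = -Real.sin u := by
      rw [show θ + ω = u + Real.pi/2 by simp [hu], Real.cos_add_pi_div_two]
    have hsinrw : Real.sin (θ + ω) = Real.cos u := by
      rw [show θ + ω = u + Real.pi/2 by simp [hu], Real.sin_add_pi_div_two]
    have htanrw : Real.tan (s * (β/2 - θ)) = -Real.tan (s * x) := by
      rw [show s * (β/2 - θ) = -(s * x) by simp [hx]; ring, Real.tan_neg]
    -- key bounds
    have hsx0 : 0 ≤ s * x := mul_nonneg hs0 hx0.le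
    have hsxle : s * x ≤ x / 2 := by nlinarith
    have hx2lt : x / 2 < Real.pi / 2 := by linarith
    have htan0 : 0 ≤ Real.tan (s * x) :=
      Real.tan_nonneg_of_nonneg_of_le_pi_div_two hsx0 (by linarith)
    have htanle : Real.tan (s * x) ≤ Real.tan (x / 2) := by
      rcases eq_or_lt_of_le hsxle with h | h
      · rw [h]
      · exact (Real.tan_lt_tan_of_nonneg_of_lt_pi_div_two hsx0 hx2lt h).le
    have htanx0 : 0 ≤ Real.tan (x / 2) := le_trans htan0 htanle
    have hsinu0 : 0 ≤ Real.sin u := Real.sin_nonneg_of_nonneg_of_le_pi (by linarith) hu2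
    -- step A : s * tan(s x) ≤ α * tan(x/2)
    have hA : s * Real.tan (s * x) ≤ α * Real.tan (x / 2) := by
      apply mul_le_mul (by linarith) htanle htan0 (by linarith)
    -- step B : tan(x/2) * sin u ≤ 1 - cos u
    have hcx : 0 < Real.cos (x / 2) :=
      Real.cos_pos_of_mem_Ioo ⟨by linarith, hx2lt⟩
    have hsu2 : 0 ≤ Real.sin (u / 2) :=
      Real.sin_nonneg_of_nonneg_of_le_pi (by linarith) (by linarith)
    have hkey : Real.sin (x/2) * Real.cos (u/2) ≤ Real.sin (u/2) * Real.cos (x/2) := by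
      have h := Real.sin_nonneg_of_nonneg_of_le_pi (x := u/2 - x/2) (by linarith) (by linarith)
      rw [Real.sin_sub] at h
      linarith
    have hsinu : Real.sin u = 2 * Real.sin (u/2) * Real.cos (u/2) := by
      rw [show u = 2 * (u/2) by ring, Real.sin_two_mul]; ring_nf
    have hcosu : 1 - Real.cos u = 2 * Real.sin (u/2) ^ 2 := by
      have h1 : Real.cos u = 2 * Real.cos (u/2) ^ 2 - 1 := by
        conv_lhs => rw [show u = 2 * (u/2) by ring]
        exact Real.cos_two_mul _
      have h2 := Real.sin_sq_add_cos_sq (u/2)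
      linarith
    have hB : Real.tan (x / 2) * Real.sin u ≤ 1 - Real.cos u := by
      rw [Real.tan_eq_sin_div_cos, hsinu, hcosu, div_mul_eq_mul_div, div_le_iff₀ hcx]
      calc Real.sin (x/2) * (2 * Real.sin (u/2) * Real.cos (u/2))
          = 2 * Real.sin (u/2) * (Real.sin (x/2) * Real.cos (u/2)) := by ring
        _ ≤ 2 * Real.sin (u/2) * (Real.sin (u/2) * Real.cos (x/2)) :=
            mul_le_mul_of_nonneg_left hkey (by positivity)
        _ = 2 * Real.sin (u/2) ^ 2 * Real.cos (x/2) := by ring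
    have hmain : s * Real.tan (s * x) * Real.sin u ≤ α * (1 - Real.cos u) := by
      calc s * Real.tan (s * x) * Real.sin u ≤ α * Real.tan (x / 2) * Real.sin u :=
            mul_le_mul_of_nonneg_right hA hsinu0
        _ = α * (Real.tan (x / 2) * Real.sin u) := by ring
        _ ≤ α * (1 - Real.cos u) := mul_le_mul_of_nonneg_left hB (by linarith)
    rw [hcosrw, hsinrw, htanrw]
    have : -(s * -Real.tan (s * x)) * -Real.sin u + α * (1 - Real.cos u)
        = α * (1 - Real.cos u) - s * Real.tan (s * x) * Real.sin u := by ring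
    rw [this]
    linarith
end

section
/- Let π/2 ≤ γ ≤ π. For each θ ∈ (0, π/2], let θ₁ ∈ (0, π/2] be the unique angle satisfying cot θ₁ = −cos γ·cot θ + sin γ. Then θ₁ ≥ θ + γ − π. -/
open Real Set

/-- For `π/2 ≤ γ ≤ π` and `θ ∈ (0, π/2]`, if `θ₁ ∈ (0, π/2]` satisfies
`cot θ₁ = −cos γ·cot θ + sin γ`, then `θ₁ ≥ θ + γ − π`. -/
theorem theta_one_lower_bound
    (γ θ θ₁ : ℝ)
    (hγ1 : Real.pi / 2 ≤ γ) (hγ2 : γ ≤ Real.pi)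
    (hθ : θ ∈ Set.Ioc 0 (Real.pi / 2))
    (hθ₁ : θ₁ ∈ Set.Ioc 0 (Real.pi / 2))
    (hcot : Real.cot θ₁ = -Real.cos γ * Real.cot θ + Real.sin γ) :
    θ + γ - Real.pi ≤ θ₁ := by
  obtain ⟨hθ0, hθπ⟩ := hθ
  obtain ⟨hθ₁0, hθ₁π⟩ := hθ₁
  rcases le_or_gt (θ + γ - Real.pi) 0 with h | h
  · linarith
  · set φ := θ + γ - Real.pi with hφ
    have hφθ : φ ≤ θ := by simp only [hφ]; linarith
    have hφπ : φ ≤ Real.pi / 2 := by linarith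
    have hsθ : 0 < Real.sin θ := Real.sin_pos_of_pos_of_lt_pi hθ0 (by linarith [Real.pi_pos])
    have hsφ : 0 < Real.sin φ := Real.sin_pos_of_pos_of_lt_pi h (by linarith [Real.pi_pos])
    have hsθ₁ : 0 < Real.sin θ₁ := Real.sin_pos_of_pos_of_lt_pi hθ₁0 (by linarith [Real.pi_pos])
    have hcφ : 0 ≤ Real.cos φ := Real.cos_nonneg_of_mem_Icc ⟨by linarith, hφπ⟩
    -- sin φ ≤ sin θ
    have hsin_le : Real.sin φ ≤ Real.sin θ := by
      apply Real.sin_le_sin_of_le_of_le_pi_div_two (by linarith) hθπ hφθ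
    -- cos φ = -cos γ * cos θ + sin γ * sin θ
    have hcosφ : Real.cos φ = -Real.cos γ * Real.cos θ + Real.sin γ * Real.sin θ := by
      have : φ = θ + γ - Real.pi := rfl
      rw [this, Real.cos_sub_pi, Real.cos_add]
      ring
    -- cot θ₁ = cos φ / sin θ
    have hcot₁ : Real.cot θ₁ = Real.cos φ / Real.sin θ := by
      rw [hcot, Real.cot_eq_cos_div_sin, hcosφ]
      field_simp
    -- cot θ₁ ≤ cot φ
    have hle : Real.cot θ₁ ≤ Real.cot φ := by
      rw [hcot₁, Real.cot_eq_cos_div_sin]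
      apply div_le_div_of_nonneg_left hcφ hsφ hsin_le
    -- conclude by anti-monotonicity of cot on (0, π/2]
    by_contra hcon
    push_neg at hcon
    have hsd : 0 < Real.sin (φ - θ₁) :=
      Real.sin_pos_of_pos_of_lt_pi (by linarith) (by linarith [Real.pi_pos])
    have : Real.cot φ < Real.cot θ₁ := by
      rw [Real.cot_eq_cos_div_sin, Real.cot_eq_cos_div_sin]
      rw [div_lt_div_iff₀ hsφ hsθ₁]
      have := Real.sin_sub φ θ₁
      nlinarith
    linarith
end

section
/- Let π/2 ≤ γ ≤ π and let g : (0, π/2] → [0, ∞) be a nonincreasing function. For each θ ∈ (0, π/2], let θ₁ ∈ (0, π/2] be the unique angle satisfying cot θ₁ = −cos γ·cot θ + sin γ. Then g(θ)·cos(θ + γ/2) + g(θ₁)·cos(θ₁ − γ/2) ≥ 0. -/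
open Real Set

/-- `cot` is strictly antitone on `(0, π)`. -/
lemma cot_lt_cot_aux {a b : ℝ} (ha : 0 < a) (hab : a < b) (hb : b < Real.pi) :
    Real.cot b < Real.cot a := by
  have hsa : 0 < Real.sin a := Real.sin_pos_of_pos_of_lt_pi ha (hab.trans hb)
  have hsb : 0 < Real.sin b := Real.sin_pos_of_pos_of_lt_pi (ha.trans hab) hb
  have hba : 0 < Real.sin (b - a) :=
    Real.sin_pos_of_pos_of_lt_pi (by linarith) (by linarith)
  have hsub := Real.sin_sub b a
  rw [Real.cot_eq_cos_div_sin, Real.cot_eq_cos_div_sin, div_lt_div_iff₀ hsb hsa]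
  nlinarith

set_option maxHeartbeats 1000000 in
/-- For `π/2 ≤ γ ≤ π`, a nonincreasing nonnegative `g` on `(0, π/2]`, `θ ∈ (0, π/2]`,
and `θ₁ ∈ (0, π/2]` with `cot θ₁ = −cos γ·cot θ + sin γ`, one has
`g(θ)·cos(θ + γ/2) + g(θ₁)·cos(θ₁ − γ/2) ≥ 0`. -/
theorem g_cos_combination_nonneg
    (γ θ θ₁ : ℝ) (g : ℝ → ℝ)
    (hγ1 : Real.pi / 2 ≤ γ) (hγ2 : γ ≤ Real.pi)
    (hg : AntitoneOn g (Set.Ioc 0 (Real.pi / 2)))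
    (hg0 : ∀ x ∈ Set.Ioc 0 (Real.pi / 2), 0 ≤ g x)
    (hθ : θ ∈ Set.Ioc 0 (Real.pi / 2))
    (hθ₁ : θ₁ ∈ Set.Ioc 0 (Real.pi / 2))
    (hcot : Real.cot θ₁ = -Real.cos γ * Real.cot θ + Real.sin γ) :
    0 ≤ g θ * Real.cos (θ + γ / 2) + g θ₁ * Real.cos (θ₁ - γ / 2) := by
  obtain ⟨hθ0, hθπ⟩ := hθ
  obtain ⟨hθ₁0, hθ₁π⟩ := hθ₁
  have hπ := Real.pi_pos
  have hsθ : 0 < Real.sin θ := Real.sin_pos_of_pos_of_lt_pi hθ0 (by linarith)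
  have hsθ₁ : 0 < Real.sin θ₁ := Real.sin_pos_of_pos_of_lt_pi hθ₁0 (by linarith)
  -- basic facts about γ/2
  have hc2 : 0 ≤ Real.cos (γ / 2) :=
    Real.cos_nonneg_of_mem_Icc ⟨by linarith, by linarith⟩
  have hs2 : 0 ≤ Real.sin (γ / 2) :=
    Real.sin_nonneg_of_nonneg_of_le_pi (by linarith) (by linarith)
  -- cos (θ₁ - γ/2) ≥ 0
  have hB : 0 ≤ Real.cos (θ₁ - γ / 2) :=
    Real.cos_nonneg_of_mem_Icc ⟨by linarith, by linarith⟩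
  -- half-angle identities
  have hγc : Real.cos γ = 2 * Real.cos (γ / 2) ^ 2 - 1 := by
    have := Real.cos_two_mul (γ / 2)
    rw [show 2 * (γ / 2) = γ by ring] at this
    exact this
  have hγs : Real.sin γ = 2 * Real.sin (γ / 2) * Real.cos (γ / 2) := by
    have := Real.sin_two_mul (γ / 2)
    rw [show 2 * (γ / 2) = γ by ring] at this
    exact this
  -- key product form of the hypothesis
  have hK : Real.cot θ₁ * Real.sin θ = -Real.cos γ * Real.cos θ + Real.sin γ * Real.sin θ := by
    rw [hcot, Real.cot_eq_cos_div_sin]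
    field_simp
    try ring
  -- fact (ii): θ - θ₁ + γ ≤ π
  have hii : θ - θ₁ + γ ≤ Real.pi := by
    by_contra hcon
    push_neg at hcon
    set x := θ + γ - Real.pi with hx
    have hx1 : θ₁ < x := by rw [hx]; linarith
    have hx2 : x ≤ Real.pi / 2 := by rw [hx]; linarith
    have hx0 : 0 < x := hθ₁0.trans hx1
    have hsx : 0 < Real.sin x := Real.sin_pos_of_pos_of_lt_pi hx0 (by linarith)
    have hcx : 0 ≤ Real.cos x :=
      Real.cos_nonneg_of_mem_Icc ⟨by linarith, by linarith⟩
    -- cos x = -cos (θ+γ), sin x = -sin (θ+γ)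
    have hcosx : Real.cos x = -Real.cos (θ + γ) := by
      rw [show x = θ + γ - Real.pi by rw [hx], Real.cos_sub_pi]
    have hsinx : Real.sin x = -Real.sin (θ + γ) := by
      rw [show x = θ + γ - Real.pi by rw [hx], Real.sin_sub_pi]
    -- sin θ + sin (θ+γ) = 2 sin (θ+γ/2) cos (γ/2) ≥ 0
    have hmid : 0 ≤ Real.sin (θ + γ / 2) :=
      Real.sin_nonneg_of_nonneg_of_le_pi (by linarith) (by linarith)
    have e1 : Real.sin (θ + γ) =
        Real.sin (θ + γ / 2) * Real.cos (γ / 2) + Real.cos (θ + γ / 2) * Real.sin (γ / 2) := by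
      have := Real.sin_add (θ + γ / 2) (γ / 2)
      rw [show θ + γ / 2 + γ / 2 = θ + γ by ring] at this
      exact this
    have e2 : Real.sin θ =
        Real.sin (θ + γ / 2) * Real.cos (γ / 2) - Real.cos (θ + γ / 2) * Real.sin (γ / 2) := by
      have := Real.sin_sub (θ + γ / 2) (γ / 2)
      rw [show θ + γ / 2 - γ / 2 = θ by ring] at this
      exact this
    -- show cot θ₁ ≤ cot x, contradicting strict antitonicity
    have hle : Real.cot θ₁ ≤ Real.cot x := by
      rw [show Real.cot x = Real.cos x / Real.sin x from Real.cot_eq_cos_div_sin x,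
        le_div_iff₀ hsx]
      have hgoal : Real.cot θ₁ * Real.sin x * Real.sin θ ≤ Real.cos x * Real.sin θ := by
        have hKx : Real.cot θ₁ * Real.sin x * Real.sin θ =
            (-Real.cos γ * Real.cos θ + Real.sin γ * Real.sin θ) * Real.sin x := by
          rw [show Real.cot θ₁ * Real.sin x * Real.sin θ
              = Real.cot θ₁ * Real.sin θ * Real.sin x by ring, hK]
        rw [hKx]
        have hcθγ : -Real.cos γ * Real.cos θ + Real.sin γ * Real.sin θ =
            -Real.cos (θ + γ) := by
          rw [Real.cos_add]; ring
        rw [hcθγ, hcosx, hsinx]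
        -- goal: -cos(θ+γ) * -sin(θ+γ) ≤ -cos(θ+γ) * sin θ
        have hcle : Real.cos (θ + γ) ≤ 0 := by rw [hcosx] at hcx; linarith
        have hsum : 0 ≤ Real.sin θ + Real.sin (θ + γ) := by
          rw [e1, e2]
          nlinarith [mul_nonneg hmid hc2]
        nlinarith [mul_nonneg (neg_nonneg.2 hcle) hsum]
      exact le_of_mul_le_mul_right hgoal hsθ
    have := cot_lt_cot_aux hθ₁0 hx1 (by linarith)
    linarith
  -- now split on the sign of cos (θ + γ/2)
  rcases le_or_gt 0 (Real.cos (θ + γ / 2)) with hA | hA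
  · have h1 := hg0 θ ⟨hθ0, hθπ⟩
    have h2 := hg0 θ₁ ⟨hθ₁0, hθ₁π⟩
    nlinarith
  · -- fact (i): θ₁ ≤ θ
    have hi : θ₁ ≤ θ := by
      by_contra hcon
      push_neg at hcon
      have hstrict := cot_lt_cot_aux hθ0 hcon (by linarith)
      -- show cot θ ≤ cot θ₁
      have hexp : Real.cos (θ + γ / 2) =
          Real.cos θ * Real.cos (γ / 2) - Real.sin θ * Real.sin (γ / 2) :=
        Real.cos_add θ (γ / 2)
      have hnum : 0 ≤ -Real.cos γ * Real.cos θ + Real.sin γ * Real.sin θ - Real.cos θ := by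
        have h := mul_nonneg hc2 (neg_nonneg.2 hA.le)
        rw [hexp] at h
        rw [hγc, hγs]
        nlinarith [h]
      have hdiff : Real.cot θ₁ - Real.cot θ =
          (-Real.cos γ * Real.cos θ + Real.sin γ * Real.sin θ - Real.cos θ) / Real.sin θ := by
        rw [hcot, Real.cot_eq_cos_div_sin]
        field_simp
        try ring
      have hle : Real.cot θ ≤ Real.cot θ₁ := by
        have := div_nonneg hnum hsθ.le
        rw [← hdiff] at this
        linarith
      linarith
    -- cos sum is nonnegative
    have hu : 0 ≤ Real.cos ((θ + θ₁) / 2) :=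
      Real.cos_nonneg_of_mem_Icc ⟨by linarith, by linarith⟩
    have hv : 0 ≤ Real.cos ((θ - θ₁ + γ) / 2) :=
      Real.cos_nonneg_of_mem_Icc ⟨by linarith, by linarith⟩
    have hsum : 0 ≤ Real.cos (θ + γ / 2) + Real.cos (θ₁ - γ / 2) := by
      have e1 : Real.cos (θ + γ / 2) =
          Real.cos ((θ + θ₁) / 2) * Real.cos ((θ - θ₁ + γ) / 2)
            - Real.sin ((θ + θ₁) / 2) * Real.sin ((θ - θ₁ + γ) / 2) := by
        have := Real.cos_add ((θ + θ₁) / 2) ((θ - θ₁ + γ) / 2)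
        rw [show (θ + θ₁) / 2 + (θ - θ₁ + γ) / 2 = θ + γ / 2 by ring] at this
        exact this
      have e2 : Real.cos (θ₁ - γ / 2) =
          Real.cos ((θ + θ₁) / 2) * Real.cos ((θ - θ₁ + γ) / 2)
            + Real.sin ((θ + θ₁) / 2) * Real.sin ((θ - θ₁ + γ) / 2) := by
        have := Real.cos_sub ((θ + θ₁) / 2) ((θ - θ₁ + γ) / 2)
        rw [show (θ + θ₁) / 2 - (θ - θ₁ + γ) / 2 = θ₁ - γ / 2 by ring] at this
        exact this
      rw [e1, e2]
      nlinarith [mul_nonneg hu hv]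
    have hgle : g θ ≤ g θ₁ := hg ⟨hθ₁0, hθ₁π⟩ ⟨hθ0, hθπ⟩ hi
    have hgθ := hg0 θ ⟨hθ0, hθπ⟩
    nlinarith [mul_nonneg (sub_nonneg.2 hgle) hB]
end

section
/- Let π ≤ β ≤ 2π and π/2 ≤ γ ≤ π with 3π/2 ≤ β + γ ≤ 2π. For each θ ∈ [π/2, (β − γ + π)/2] with 0 < β − θ < π, let θ₁ ∈ (0, π) be the unique angle satisfying cot θ₁ = −cos(β+γ)·cot(β−θ) − sin(β+γ). Then θ₁ ≥ θ + γ − π. -/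
open Real Set

/-- For `π ≤ β ≤ 2π`, `π/2 ≤ γ ≤ π` with `3π/2 ≤ β + γ ≤ 2π`, and
`θ ∈ [π/2, (β − γ + π)/2]` with `0 < β − θ < π`, if `θ₁ ∈ (0, π)` satisfies
`cot θ₁ = −cos(β+γ)·cot(β−θ) − sin(β+γ)`, then `θ₁ ≥ θ + γ − π`. -/
theorem theta_one_lower_bound_B3
    (β γ θ θ₁ : ℝ)
    (hβ1 : Real.pi ≤ β) (hβ2 : β ≤ 2 * Real.pi)
    (hγ1 : Real.pi / 2 ≤ γ) (hγ2 : γ ≤ Real.pi)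
    (hsum1 : 3 * Real.pi / 2 ≤ β + γ) (hsum2 : β + γ ≤ 2 * Real.pi)
    (hθ : θ ∈ Set.Icc (Real.pi / 2) ((β - γ + Real.pi) / 2))
    (hβθ1 : 0 < β - θ) (hβθ2 : β - θ < Real.pi)
    (hθ₁ : θ₁ ∈ Set.Ioo 0 Real.pi)
    (hcot : Real.cot θ₁ = -Real.cos (β + γ) * Real.cot (β - θ) - Real.sin (β + γ)) :
    θ + γ - Real.pi ≤ θ₁ := by
  obtain ⟨hθl, hθu⟩ := hθ
  obtain ⟨hθ₁l, hθ₁u⟩ := hθ₁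
  have hπ := Real.pi_pos
  set t := θ + γ - Real.pi with ht
  rcases le_or_gt t 0 with h | h
  · linarith
  have ht2 : t ≤ Real.pi / 2 := by rw [ht]; linarith
  have hsinx : 0 < Real.sin (β - θ) := Real.sin_pos_of_pos_of_lt_pi hβθ1 hβθ2
  have hsint : 0 < Real.sin t := Real.sin_pos_of_pos_of_lt_pi h (by linarith)
  have hsinθ₁ : 0 < Real.sin θ₁ := Real.sin_pos_of_pos_of_lt_pi hθ₁l hθ₁u
  have hcosp : Real.cos (β + γ) = -Real.cos (β + γ - Real.pi) := by
    have := Real.cos_add_pi (β + γ - Real.pi)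
    rw [show β + γ - Real.pi + Real.pi = β + γ by ring] at this
    linarith
  have hsinp : Real.sin (β + γ) = -Real.sin (β + γ - Real.pi) := by
    have := Real.sin_add_pi (β + γ - Real.pi)
    rw [show β + γ - Real.pi + Real.pi = β + γ by ring] at this
    linarith
  have hct : Real.cos t = Real.cos (β + γ - Real.pi) * Real.cos (β - θ)
      + Real.sin (β + γ - Real.pi) * Real.sin (β - θ) := by
    rw [ht, show θ + γ - Real.pi = (β + γ - Real.pi) - (β - θ) by ring, Real.cos_sub]
  have hcost : 0 ≤ Real.cos t := Real.cos_nonneg_of_mem_Icc ⟨by linarith, ht2⟩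
  have hsins : Real.sin t ≤ Real.sin (β - θ) := by
    have := Real.sin_sub_sin (β - θ) t
    have h1 : 0 ≤ Real.sin ((β - θ - t) / 2) :=
      Real.sin_nonneg_of_nonneg_of_le_pi (by rw [ht]; linarith) (by rw [ht]; linarith)
    have h2 : 0 ≤ Real.cos ((β - θ + t) / 2) :=
      Real.cos_nonneg_of_mem_Icc ⟨by rw [ht]; linarith, by rw [ht]; linarith⟩
    nlinarith
  have key : Real.cot θ₁ ≤ Real.cot t := by
    rw [hcot, hcosp, hsinp, Real.cot_eq_cos_div_sin, Real.cot_eq_cos_div_sin]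
    have h1 : - -Real.cos (β + γ - Real.pi) * (Real.cos (β - θ) / Real.sin (β - θ))
        - -Real.sin (β + γ - Real.pi) = Real.cos t / Real.sin (β - θ) := by
      rw [hct]; field_simp; ring
    rw [h1, div_le_div_iff₀ hsinx hsint]
    nlinarith [mul_nonneg hcost (sub_nonneg.2 hsins)]
  by_contra hlt
  push_neg at hlt
  have hd : 0 < Real.sin (t - θ₁) :=
    Real.sin_pos_of_pos_of_lt_pi (by linarith) (by linarith)
  rw [Real.sin_sub] at hd
  rw [Real.cot_eq_cos_div_sin, Real.cot_eq_cos_div_sin, div_le_div_iff₀ hsinθ₁ hsint] at key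
  nlinarith
end

section
/- For every real c with (4√2 − 5)/(64·(5√2 − 7)) ≤ c ≤ 1/4 and every t ∈ [2 − √2, 1], one has 1 − t² − 4c·t²·(2 − t²)·(2 − t)² ≤ 0. -/
open Real Set

/-- For every `c` with `(4√2 − 5)/(64·(5√2 − 7)) ≤ c ≤ 1/4` and every
`t ∈ [2 − √2, 1]`, one has `1 − t² − 4c·t²·(2 − t²)·(2 − t)² ≤ 0`. -/
theorem w_nonpositive
    (c t : ℝ)
    (hc1 : (4 * Real.sqrt 2 - 5) / (64 * (5 * Real.sqrt 2 - 7)) ≤ c)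
    (hc2 : c ≤ 1 / 4)
    (ht : t ∈ Set.Icc (2 - Real.sqrt 2) 1) :
    1 - t ^ 2 - 4 * c * t ^ 2 * (2 - t ^ 2) * (2 - t) ^ 2 ≤ 0 := by
  obtain ⟨ht1, ht2⟩ := ht
  set s := Real.sqrt 2 with hs
  have hs2 : s ^ 2 = 2 := Real.sq_sqrt (by norm_num)
  have hs1 : (1.414 : ℝ) ≤ s := by nlinarith [Real.sqrt_nonneg 2]
  have hs15 : s ≤ 1.415 := by nlinarith [Real.sqrt_nonneg 2]
  have hden : (0 : ℝ) < 64 * (5 * s - 7) := by nlinarith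
  have ht0 : (0 : ℝ) < t := by nlinarith
  have hu : 0 ≤ t - (2 - s) := by linarith
  have h1t : 0 ≤ 1 - t := by linarith
  -- the quintic cofactor is positive on the interval
  have hq : 0 ≤ (96 * s - 128) + (32 * s - 32) * t + (160 - 128 * s) * t ^ 2
      + (12 * s - 8) * t ^ 4 + (20 - 16 * s) * t ^ 5 := by
    nlinarith [mul_nonneg hu h1t, mul_nonneg (mul_nonneg hu h1t) ht0.le,
      mul_nonneg (mul_nonneg (mul_nonneg hu h1t) ht0.le) ht0.le,
      mul_nonneg (mul_nonneg (mul_nonneg (mul_nonneg hu h1t) ht0.le) ht0.le) ht0.le,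
      mul_nonneg hu hu, mul_nonneg h1t h1t, sq_nonneg (t - 1), sq_nonneg t,
      mul_nonneg (mul_nonneg h1t h1t) ht0.le]
  -- exact factorization : p(t) = (t - (2 - s)) * q(t)
  have hid : 4 * (4 * s - 5) * t ^ 2 * (2 - t ^ 2) * (2 - t) ^ 2
      - 64 * (5 * s - 7) * (1 - t ^ 2)
      = (t - (2 - s)) * ((96 * s - 128) + (32 * s - 32) * t + (160 - 128 * s) * t ^ 2
        + (12 * s - 8) * t ^ 4 + (20 - 16 * s) * t ^ 5) := by
    linear_combination (16 * t ^ 5 - 12 * t ^ 4 + 128 * t ^ 2 - 32 * t - 96) * hs2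
  have hkey : 64 * (5 * s - 7) * (1 - t ^ 2)
      ≤ 4 * (4 * s - 5) * t ^ 2 * (2 - t ^ 2) * (2 - t) ^ 2 := by
    nlinarith [mul_nonneg hu hq]
  have hF : 0 ≤ 4 * t ^ 2 * (2 - t ^ 2) * (2 - t) ^ 2 := by nlinarith [sq_nonneg (2 - t)]
  have hc0 : (4 * s - 5) ≤ c * (64 * (5 * s - 7)) := by
    rw [div_le_iff₀ hden] at hc1; linarith
  nlinarith [mul_le_mul_of_nonneg_right hc0 hF, mul_pos hden ht0]
end
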